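/- arXiv:2503.24170 — 3 statements merged into one kernel-verified Lean document; each statement's English description precedes it below -/
import Mathlib

section
/- Every intrinsically localized B(H)-valued sequence is a g-Bessel sequence. Precisely: let H be a separable complex Hilbert space, X a countable index set, and (T_k)_{k∈X} a family of bounded operators on H. If there exists a bounded operator G ∈ B(ℓ²(X;H)) whose (k,l) matrix entry equals T_k T_l* for all k,l ∈ X, then (T_k)_{k∈X} is a g-Bessel sequence; in fact ∑_{k∈X} ‖T_k f‖² ≤ ‖G‖_{B(ℓ²(X;H))} ‖f‖² for all f ∈ H. -/
open scoped ComplexConjugate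

local notation "⟪" x ", " y "⟫" => @inner ℂ _ _ x y

private lemma key_synthesis_bound
    {X : Type*} [Countable X] [DecidableEq X]
    {H : Type*} [NormedAddCommGroup H] [InnerProductSpace ℂ H] [CompleteSpace H]
    (T : X → H →L[ℂ] H)
    (G : lp (fun _ : X => H) 2 →L[ℂ] lp (fun _ : X => H) 2)
    (hG : ∀ (k l : X) (h : H),
      (G (lp.single 2 l h)) k = T k ((ContinuousLinearMap.adjoint (T l)) h))
    (F : Finset X) (h : X → H) :
    ‖∑ l ∈ F, (ContinuousLinearMap.adjoint (T l)) (h l)‖ ^ 2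
      ≤ ‖G‖ * ∑ l ∈ F, ‖h l‖ ^ 2 := by
  set u : lp (fun _ : X => H) 2 := ∑ l ∈ F, lp.single 2 l (h l) with hu
  set v : H := ∑ l ∈ F, (ContinuousLinearMap.adjoint (T l)) (h l) with hv
  have huGu : ⟪u, G u⟫ = (‖v‖ : ℂ) ^ 2 := by
    have : ⟪u, G u⟫ = ⟪v, v⟫ := by
      rw [hu, map_sum, inner_sum]
      rw [hv, inner_sum]
      refine Finset.sum_congr rfl fun k hk => ?_
      rw [sum_inner, sum_inner]
      refine Finset.sum_congr rfl fun l hl => ?_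
      rw [lp.inner_single_left, hG l k (h k), ← ContinuousLinearMap.adjoint_inner_left]
    rw [this, inner_self_eq_norm_sq_to_K]
    norm_cast
  have hnormu : ‖u‖ ^ 2 = ∑ l ∈ F, ‖h l‖ ^ 2 := by
    have : ⟪u, u⟫ = (∑ l ∈ F, (‖h l‖ : ℂ) ^ 2) := by
      rw [hu, inner_sum]
      refine Finset.sum_congr rfl fun k hk => ?_
      rw [sum_inner]
      rw [Finset.sum_eq_single k]
      · rw [lp.inner_single_left, lp.single_apply_self, inner_self_eq_norm_sq_to_K]
        norm_cast
      · intro l hl hlk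
        rw [lp.inner_single_left, lp.single_apply_ne (E := fun _ : X => H) 2 k (h k) hlk,
          inner_zero_right]
      · intro hk'; exact absurd hk hk'
    rw [inner_self_eq_norm_sq_to_K] at this
    have h2 := congrArg Complex.re this
    simpa [Complex.re_sum, ← Complex.ofReal_pow] using h2
  have h1 : ‖v‖ ^ 2 ≤ ‖u‖ * ‖G u‖ := by
    have := norm_inner_le_norm (𝕜 := ℂ) u (G u)
    rw [huGu] at this
    simpa using this
  have h2 : ‖G u‖ ≤ ‖G‖ * ‖u‖ := G.le_opNorm u
  have hGnn : (0:ℝ) ≤ ‖G‖ := norm_nonneg _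
  have hunn : (0:ℝ) ≤ ‖u‖ := norm_nonneg _
  calc ‖v‖ ^ 2 ≤ ‖u‖ * (‖G‖ * ‖u‖) :=
        h1.trans (by nlinarith)
    _ = ‖G‖ * ‖u‖ ^ 2 := by ring
    _ = ‖G‖ * ∑ l ∈ F, ‖h l‖ ^ 2 := by rw [hnormu]

/-- **Every intrinsically localized `B(H)`-valued sequence is a g-Bessel sequence.**
Let `H` be a separable complex Hilbert space, `X` a countable index set and
`(T k)_{k ∈ X}` a family of bounded operators on `H`. If there is a bounded operator
`G` on `ℓ²(X;H)` whose `(k,l)` matrix entry (i.e. `h ↦ (G (δ_l h)) k`) equals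
`T k ∘ (T l)*` for all `k, l`, then `∑ₖ ‖T k f‖² ≤ ‖G‖ ‖f‖²` for all `f ∈ H`;
in particular `(T k)` is a g-Bessel sequence. -/
theorem gBessel_of_intrinsically_localized
    {X : Type*} [Countable X] [DecidableEq X]
    {H : Type*} [NormedAddCommGroup H] [InnerProductSpace ℂ H] [CompleteSpace H]
    [TopologicalSpace.SeparableSpace H]
    (T : X → H →L[ℂ] H)
    (G : lp (fun _ : X => H) 2 →L[ℂ] lp (fun _ : X => H) 2)
    (hG : ∀ (k l : X) (h : H),
      (G (lp.single 2 l h)) k = T k ((ContinuousLinearMap.adjoint (T l)) h)) :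
    ∀ f : H, Summable (fun k => ‖T k f‖ ^ 2) ∧
      ∑' k, ‖T k f‖ ^ 2 ≤ ‖G‖ * ‖f‖ ^ 2 := by
  intro f
  have hF : ∀ F : Finset X, ∑ k ∈ F, ‖T k f‖ ^ 2 ≤ ‖G‖ * ‖f‖ ^ 2 := by
    intro F
    set S : ℝ := ∑ k ∈ F, ‖T k f‖ ^ 2 with hS
    set v : H := ∑ k ∈ F, (ContinuousLinearMap.adjoint (T k)) (T k f) with hv
    have hSnn : 0 ≤ S := Finset.sum_nonneg fun k _ => sq_nonneg _
    have hkey : ‖v‖ ^ 2 ≤ ‖G‖ * S :=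
      key_synthesis_bound T G hG F (fun k => T k f)
    have hSre : S = (⟪v, f⟫).re := by
      rw [hv, hS, sum_inner, Complex.re_sum]
      refine Finset.sum_congr rfl fun k hk => ?_
      rw [ContinuousLinearMap.adjoint_inner_left, ← inner_self_eq_norm_sq (𝕜 := ℂ)]
      rfl
    have hle : S ≤ ‖v‖ * ‖f‖ := by
      rw [hSre]
      calc (⟪v, f⟫).re ≤ ‖⟪v, f⟫‖ := Complex.re_le_norm _
        _ = ‖⟪v, f⟫‖ := rfl
        _ ≤ ‖v‖ * ‖f‖ := norm_inner_le_norm _ _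
    rcases eq_or_lt_of_le hSnn with h0 | h0
    · rw [← h0]; positivity
    · have : S ^ 2 ≤ (‖G‖ * S) * ‖f‖ ^ 2 := by
        have hv2 : S ^ 2 ≤ (‖v‖ * ‖f‖) ^ 2 := by
          have := mul_le_mul hle hle hSnn (by positivity)
          nlinarith
        nlinarith [sq_nonneg ‖f‖, sq_nonneg ‖v‖]
      have := (mul_le_mul_iff_of_pos_right h0).mp (by nlinarith : S * S ≤ (‖G‖ * ‖f‖ ^ 2) * S)
      exact this
  have hsum : Summable (fun k => ‖T k f‖ ^ 2) :=
    summable_of_sum_le (fun k => sq_nonneg _) hF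
  exact ⟨hsum, Summable.tsum_le_of_sum_le hsum hF⟩
end

section
/- Pseudo-inverse-closedness: let K be a complex Hilbert space, 𝒜 a star-subalgebra of B(K) equipped with a norm ‖·‖_𝒜 making 𝒜 a Banach *-algebra whose inclusion into B(K) is bounded, and assume 𝒜 is inverse-closed in B(K). If A ∈ 𝒜 has closed range, then its Moore–Penrose pseudo-inverse A† belongs to 𝒜. -/
open ContinuousLinearMap Metric Complex
set_option maxHeartbeats 1000000

local notation "⟪" x ", " y "⟫" => @inner ℂ _ _ x y

lemma real_aux1 (x a y c : ℝ) (hx : 0 ≤ x) (ha : 0 ≤ a) (hy : 0 ≤ y) (hc : 0 ≤ c)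
    (h1 : x^2 ≤ a*y) (h2 : y^2 ≤ c*x^2) : x^2 ≤ c*a^2 := by
  rcases eq_or_lt_of_le hx with h | h
  · nlinarith
  · have k1 : x^2*x^2 ≤ (a*y)*(a*y) := mul_le_mul h1 h1 (sq_nonneg x) (mul_nonneg ha hy)
    have k2 : (a*y)*(a*y) = a^2*y^2 := by ring
    have k3 : a^2*y^2 ≤ a^2*(c*x^2) := mul_le_mul_of_nonneg_left h2 (sq_nonneg a)
    have k4 : x^2*x^2 ≤ (c*a^2)*x^2 := by nlinarith [k1, k3]
    exact le_of_mul_le_mul_right k4 (pow_pos h 2)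
lemma real_aux2 (q x : ℝ) (hq : 0 ≤ q) (hx : 0 ≤ x) (h : q^2 ≤ x*q) : q ≤ x := by
  rcases eq_or_lt_of_le hq with h' | h'
  · linarith
  · nlinarith
lemma real_aux3 (p s c : ℝ) (hp : 0 < p) (h : p^2 ≤ c*s^2) : 0 < c := by
  nlinarith [sq_nonneg s, sq_nonneg p]
lemma real_aux4 (d c s : ℝ) (hs : 0 < s) (h : d*s^2 ≤ c*s^2) : d ≤ c :=
  le_of_mul_le_mul_right h (pow_pos hs 2)
lemma real_aux5 (ρ c δ : ℝ) (hρ : 0 ≤ ρ) (hδ : 0 < δ) (hδc : δ ≤ c)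
    (h : ρ^2 = c*(c-δ)) : ρ < c := by
  nlinarith
lemma real_aux6 (t α u c δ ρ : ℝ) (hc : 0 ≤ c) (h1 : t ≤ c*α) (h2 : δ*u ≤ α)
    (h3 : ρ^2 = c*(c-δ)) : t - 2*(c*α) + c^2*u ≤ ρ^2*u := by
  have k : c*(δ*u) ≤ c*α := mul_le_mul_of_nonneg_left h2 hc
  have e : ρ^2*u = c^2*u - c*(δ*u) := by rw [h3]; ring
  linarith [e, k, h1]



section Aux
variable {X : Type*} [NormedRing X] [NormedAlgebra ℂ X] [CompleteSpace X]

lemma aux_isUnit (V : X) {w : ℂ} (h : ‖V‖ < ‖w‖) : IsUnit (w • (1:X) - V) := by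
  have hw : w ≠ 0 := by
    intro h0
    rw [h0, norm_zero] at h
    exact absurd h (norm_nonneg V).not_gt
  have h1 : ‖w⁻¹ • V‖ < 1 := by
    rw [norm_smul, norm_inv]
    rw [inv_mul_lt_iff₀ (lt_of_le_of_lt (norm_nonneg V) h), mul_one]
    exact h
  have hu1 : IsUnit ((1:X) - w⁻¹ • V) := isUnit_one_sub_of_norm_lt_one h1
  have hu2 : IsUnit (w • (1:X)) := by
    rw [← Algebra.algebraMap_eq_smul_one]
    exact (isUnit_iff_ne_zero.mpr hw).map (algebraMap ℂ X)
  have key : w • (1:X) - V = (w • (1:X)) * ((1:X) - w⁻¹ • V) := by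
    rw [smul_mul_assoc, one_mul, smul_sub, smul_smul, mul_inv_cancel₀ hw, one_smul]
  rw [key]
  exact hu2.mul hu1

lemma aux_inv_norm [NormOneClass X] (V : X) {w : ℂ} (h : ‖V‖ < ‖w‖) :
    ‖Ring.inverse (w • (1:X) - V)‖ ≤ (‖w‖ - ‖V‖)⁻¹ := by
  have hu := aux_isUnit V h
  set y := Ring.inverse (w • (1:X) - V) with hy
  have h1 : (w • (1:X) - V) * y = 1 := Ring.mul_inverse_cancel _ hu
  have h2 : w • y = 1 + V * y := by
    rw [sub_mul, smul_mul_assoc, one_mul, sub_eq_iff_eq_add] at h1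
    rw [h1]
  have h3 : ‖w‖ * ‖y‖ ≤ 1 + ‖V‖ * ‖y‖ := by
    calc ‖w‖ * ‖y‖ = ‖w • y‖ := (norm_smul w y).symm
    _ = ‖1 + V * y‖ := by rw [h2]
    _ ≤ ‖(1:X)‖ + ‖V * y‖ := norm_add_le _ _
    _ ≤ 1 + ‖V‖ * ‖y‖ := by
        rw [norm_one]
        exact add_le_add le_rfl (norm_mul_le _ _)
  have hd : 0 < ‖w‖ - ‖V‖ := by linarith
  rw [← one_div, le_div_iff₀ hd]
  nlinarith

lemma aux_cont_inverse (V : X) (c : ℂ) {R : ℝ} (hV : ‖V‖ < R) :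
    ContinuousOn (fun z : ℂ => Ring.inverse ((z - c) • (1:X) - V)) (sphere c R) := by
  intro z hz
  rw [mem_sphere_iff_norm] at hz
  have hzw : ‖V‖ < ‖z - c‖ := by rw [hz]; exact hV
  have hu := aux_isUnit V hzw
  have hg : Continuous (fun z : ℂ => (z - c) • (1:X) - V) := by
    exact (((continuous_id.sub continuous_const).smul continuous_const).sub continuous_const)
  have : ContinuousAt (fun z : ℂ => Ring.inverse ((z - c) • (1:X) - V)) z := by
    apply ContinuousAt.comp (g := Ring.inverse)
    · rw [← hu.unit_spec]
      exact NormedRing.inverse_continuousAt hu.unit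
    · exact hg.continuousAt
  exact this.continuousWithinAt

lemma aux_circle_add {f g : ℂ → X} {c : ℂ} {R : ℝ} (hf : CircleIntegrable f c R)
    (hg : CircleIntegrable g c R) :
    (∮ z in C(c, R), (f z + g z)) = (∮ z in C(c, R), f z) + ∮ z in C(c, R), g z := by
  simp only [circleIntegral, smul_add, intervalIntegral.integral_add hf.out hg.out]

lemma aux_circleIntegral_resolvent [NormOneClass X]
    (V : X) (c : ℂ) {R : ℝ} (hV : ‖V‖ < R) :
    (∮ z in C(c, R), Ring.inverse ((z - c) • (1:X) - V))
      = (2 * Real.pi * Complex.I : ℂ) • (1:X) := by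
  have hR0 : 0 < R := lt_of_le_of_lt (norm_nonneg V) hV
  set F : ℂ → X := fun z => Ring.inverse ((z - c) • (1:X) - V) with hF
  have hFcont : ContinuousOn F (sphere c R) := aux_cont_inverse V c hV
  have hIntF : CircleIntegrable F c R := hFcont.circleIntegrable hR0.le
  -- sum and remainder functions
  set g : ℕ → ℂ → X := fun n z => ((z - c)⁻¹)^(n+1) • V^n with hgdef
  set rem : ℕ → ℂ → X := fun N z => ((z - c)⁻¹)^N • (F z * V^N) with hremdef
  have hcne : ∀ z ∈ sphere c R, z - c ≠ 0 := by
    intro z hz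
    rw [mem_sphere_iff_norm] at hz
    intro h0
    rw [h0, norm_zero] at hz
    exact hR0.ne hz
  have hgcont : ∀ n, ContinuousOn (g n) (sphere c R) := by
    intro n
    apply ContinuousOn.smul _ continuousOn_const
    exact (((continuousOn_id.sub continuousOn_const).inv₀ hcne).pow (n+1))
  have hgint : ∀ n, CircleIntegrable (g n) c R := fun n => (hgcont n).circleIntegrable hR0.le
  have hremint : ∀ N, CircleIntegrable (rem N) c R := by
    intro N
    apply ContinuousOn.circleIntegrable hR0.le
    apply ContinuousOn.smul
    · exact (((continuousOn_id.sub continuousOn_const).inv₀ hcne).pow N)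
    · exact hFcont.mul continuousOn_const
  -- pointwise expansion
  have hEq : ∀ N, Set.EqOn F (fun z => (∑ n ∈ Finset.range N, g n z) + rem N z) (sphere c R) := by
    intro N z hz
    rw [mem_sphere_iff_norm] at hz
    have hw : ‖V‖ < ‖z - c‖ := by rw [hz]; exact hV
    have hw0 : z - c ≠ 0 := by
      intro h0; rw [h0, norm_zero] at hz; exact hR0.ne hz
    set w := z - c with hwdef
    have h1 : (w • (1:X) - V) * F z = 1 := Ring.mul_inverse_cancel _ (aux_isUnit V hw)
    have h2 : F z * (w • (1:X) - V) = 1 := Ring.inverse_mul_cancel _ (aux_isUnit V hw)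
    have hterm : ∀ n : ℕ, (w • (1:X) - V) * ((w⁻¹)^(n+1) • V^n)
        = (w⁻¹)^n • V^n - (w⁻¹)^(n+1) • V^(n+1) := by
      intro n
      rw [sub_mul, smul_mul_assoc, one_mul, smul_smul, mul_smul_comm]
      congr 2
      · rw [pow_succ' w⁻¹ n, ← mul_assoc, mul_inv_cancel₀ hw0, one_mul]
      · rw [← pow_succ']
    have hgeo : (w • (1:X) - V) * (∑ n ∈ Finset.range N, (w⁻¹)^(n+1) • V^n)
        = 1 - (w⁻¹)^N • V^N := by
      rw [Finset.mul_sum]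
      rw [Finset.sum_congr rfl (fun n _ => hterm n)]
      rw [Finset.sum_range_sub' (fun n => (w⁻¹)^n • V^n) N]
      simp
    have key : F z * ((w • (1:X) - V) * (∑ n ∈ Finset.range N, (w⁻¹)^(n+1) • V^n))
        = ∑ n ∈ Finset.range N, (w⁻¹)^(n+1) • V^n := by
      rw [← mul_assoc, h2, one_mul]
    rw [hgeo, mul_sub, mul_one, mul_smul_comm] at key
    show F z = (∑ n ∈ Finset.range N, (w⁻¹)^(n+1) • V^n) + (w⁻¹)^N • (F z * V^N)
    rw [← key]
    abel
  -- integral of each summand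
  have hgval0 : (∮ z in C(c, R), g 0 z) = (2 * Real.pi * Complex.I : ℂ) • (1:X) := by
    have h1 : (∮ z in C(c, R), g 0 z) = (∮ z in C(c, R), (z - c)⁻¹ • (1:X)) := by
      apply circleIntegral.integral_congr hR0.le
      intro z _
      simp [hgdef]
    rw [h1, circleIntegral.integral_smul_const, circleIntegral.integral_sub_center_inv c hR0.ne']
  have hgval : ∀ n : ℕ, n ≠ 0 → (∮ z in C(c, R), g n z) = 0 := by
    intro n hn
    have hzpow : ∀ z : ℂ, z ∈ sphere c R → g n z = (z - c) ^ (-((n:ℤ)+1)) • V^n := by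
      intro z _
      show (z - c)⁻¹ ^ (n+1) • V^n = _
      congr 1
      rw [zpow_neg, ← inv_zpow]
      rw [show ((n:ℤ)+1) = ((n+1 : ℕ) : ℤ) by push_cast; ring]
      rw [zpow_natCast]
    rw [circleIntegral.integral_congr hR0.le hzpow]
    have : (∮ z in C(c, R), (z - c) ^ (-((n:ℤ)+1)) • V^n)
        = (∮ z in C(c, R), (z - c) ^ (-((n:ℤ)+1))) • V^n :=
      circleIntegral.integral_smul_const _ _ _ _
    rw [this, circleIntegral.integral_sub_zpow_of_ne _ c c R, zero_smul]
    intro h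
    omega
  -- exchanging finite sum and integral
  have hsum : ∀ N, (∮ z in C(c, R), ∑ n ∈ Finset.range N, g n z)
      = ∑ n ∈ Finset.range N, ∮ z in C(c, R), g n z := by
    intro N
    simp only [circleIntegral, Finset.smul_sum]
    rw [intervalIntegral.integral_finset_sum]
    intro i _
    exact (hgint i).out
  have hsumval : ∀ N, 1 ≤ N →
      (∮ z in C(c, R), ∑ n ∈ Finset.range N, g n z) = (2 * Real.pi * Complex.I : ℂ) • (1:X) := by
    intro N hN
    rw [hsum N]
    rw [Finset.sum_eq_single_of_mem 0 (Finset.mem_range.mpr hN)]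
    · exact hgval0
    · intro n _ hn
      exact hgval n hn
  have hsumint : ∀ N, CircleIntegrable (fun z => ∑ n ∈ Finset.range N, g n z) c R := by
    intro N
    apply ContinuousOn.circleIntegrable hR0.le
    apply continuousOn_finset_sum
    intro i _
    exact hgcont i
  -- remainder bound
  have hrembound : ∀ N : ℕ, 1 ≤ N →
      ‖(∮ z in C(c, R), rem N z)‖
        ≤ 2 * Real.pi * R * ((R - ‖V‖)⁻¹ * (‖V‖/R)^N) := by
    intro N hN
    have hptwise : ∀ z ∈ sphere c R, ‖rem N z‖ ≤ (R - ‖V‖)⁻¹ * (‖V‖/R)^N := by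
      intro z hz
      rw [mem_sphere_iff_norm] at hz
      have hw : ‖V‖ < ‖z - c‖ := by rw [hz]; exact hV
      have hFb : ‖F z‖ ≤ (R - ‖V‖)⁻¹ := by
        have := aux_inv_norm V hw
        rwa [hz] at this
      have hVN : ‖V^N‖ ≤ ‖V‖^N := norm_pow_le' V hN
      calc ‖rem N z‖ = ‖(z - c)⁻¹ ^ N‖ * ‖F z * V^N‖ := norm_smul _ _
      _ ≤ ‖(z - c)⁻¹ ^ N‖ * (‖F z‖ * ‖V^N‖) := by
          apply mul_le_mul_of_nonneg_left (norm_mul_le _ _) (norm_nonneg _)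
      _ = (R⁻¹)^N * (‖F z‖ * ‖V^N‖) := by rw [norm_pow, norm_inv, hz]
      _ ≤ (R⁻¹)^N * ((R - ‖V‖)⁻¹ * ‖V‖^N) := by
          apply mul_le_mul_of_nonneg_left _ (by positivity)
          apply mul_le_mul hFb hVN (norm_nonneg _) (inv_nonneg.mpr (by linarith))
      _ = (R - ‖V‖)⁻¹ * (‖V‖/R)^N := by
          rw [div_pow, div_eq_mul_inv, ← inv_pow]
          ring
    have := circleIntegral.norm_integral_le_of_norm_le_const hR0.le hptwise
    exact this
  -- putting it together
  have hsplit : ∀ N : ℕ, 1 ≤ N →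
      (∮ z in C(c, R), F z)
        = (2 * Real.pi * Complex.I : ℂ) • (1:X) + ∮ z in C(c, R), rem N z := by
    intro N hN
    rw [circleIntegral.integral_congr hR0.le (hEq N)]
    rw [aux_circle_add (hsumint N) (hremint N)]
    rw [hsumval N hN]
  have hdiff : ∀ N : ℕ, 1 ≤ N →
      ‖(∮ z in C(c, R), F z) - (2 * Real.pi * Complex.I : ℂ) • (1:X)‖
        ≤ 2 * Real.pi * R * ((R - ‖V‖)⁻¹ * (‖V‖/R)^N) := by
    intro N hN
    rw [hsplit N hN]
    rw [add_sub_cancel_left]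
    exact hrembound N hN
  have hq1 : ‖V‖/R < 1 := (div_lt_one hR0).mpr hV
  have hq0 : 0 ≤ ‖V‖/R := by positivity
  have htend : Filter.Tendsto
      (fun N : ℕ => 2 * Real.pi * R * ((R - ‖V‖)⁻¹ * (‖V‖/R)^N)) Filter.atTop (nhds 0) := by
    have h0 := tendsto_pow_atTop_nhds_zero_of_lt_one hq0 hq1
    have := (h0.const_mul ((R - ‖V‖)⁻¹)).const_mul (2 * Real.pi * R)
    simpa using this
  have hnorm0 : ‖(∮ z in C(c, R), F z) - (2 * Real.pi * Complex.I : ℂ) • (1:X)‖ ≤ 0 := by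
    apply ge_of_tendsto htend
    filter_upwards [Filter.eventually_ge_atTop 1] with N hN
    exact hdiff N hN
  have := norm_le_zero_iff.mp hnorm0
  rw [sub_eq_zero] at this
  exact this
end Aux


open ContinuousLinearMap

/-- **Pseudo-inverse-closedness.** Let `K` be a complex Hilbert space and `𝒜` a Banach
*-algebra realized as a *-subalgebra of `B(K)` via an injective, bounded, unital
*-algebra homomorphism `ι` (so `A ∈ 𝒜` is encoded as `A ∈ Set.range ι`), and assume
`𝒜` is inverse-closed in `B(K)`. If `A ∈ 𝒜` has closed range, then the Moore–Penrose
pseudo-inverse `A†` of `A` (characterized by `ker A† = (ran A)ᗮ`,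
`ran A† = (ker A)ᗮ`, `A A† A = A`) belongs to `𝒜`. -/
theorem pseudoInverse_closed_of_inverseClosed
    {K : Type*} [NormedAddCommGroup K] [InnerProductSpace ℂ K] [CompleteSpace K]
    {𝔄 : Type*} [NormedRing 𝔄] [StarRing 𝔄] [NormedAlgebra ℂ 𝔄] [CompleteSpace 𝔄]
    (ι : 𝔄 →⋆ₐ[ℂ] (K →L[ℂ] K))
    (hinj : Function.Injective ι)
    (hbdd : ∃ c : ℝ, ∀ a : 𝔄, ‖ι a‖ ≤ c * ‖a‖)
    (hinvcl : ∀ (a : 𝔄) (B : K →L[ℂ] K),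
      (ι a) ∘L B = 1 → B ∘L (ι a) = 1 → B ∈ Set.range ι)
    (A : K →L[ℂ] K) (hA : A ∈ Set.range ι)
    (hclosed : IsClosed (Set.range A)) :
    ∀ B : K →L[ℂ] K,
      LinearMap.ker (B : K →ₗ[ℂ] K) = (LinearMap.range (A : K →ₗ[ℂ] K))ᗮ →
      LinearMap.range (B : K →ₗ[ℂ] K) = (LinearMap.ker (A : K →ₗ[ℂ] K))ᗮ →
      A ∘L B ∘L A = A →
      B ∈ Set.range ι := by
  intro B hKer hRan hABA
  obtain ⟨a, ha⟩ := hA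
  by_cases hA0 : A = 0
  · have hkertop : LinearMap.ker (B : K →ₗ[ℂ] K) = ⊤ := by
      have h0 : LinearMap.range ((0 : K →L[ℂ] K) : K →ₗ[ℂ] K) = ⊥ := by
        rw [Submodule.eq_bot_iff]
        rintro y ⟨x, rfl⟩
        rfl
      rw [hKer, hA0, h0, Submodule.bot_orthogonal_eq_top]
    have hB0 : B = 0 := by
      ext x
      have : x ∈ LinearMap.ker (B : K →ₗ[ℂ] K) := hkertop ▸ Submodule.mem_top
      simpa using this
    exact ⟨0, by rw [map_zero, hB0]⟩
  have hex : ∃ x : K, A x ≠ 0 := by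
    by_contra h
    push_neg at h
    exact hA0 (ContinuousLinearMap.ext fun x => by simp [h x])
  obtain ⟨x₀, hx₀⟩ := hex
  haveI : Nontrivial K := ⟨⟨A x₀, 0, hx₀⟩⟩
  -- basic operators
  set T : K →L[ℂ] K := ContinuousLinearMap.adjoint A ∘L A with hT
  set Q : K →L[ℂ] K := B ∘L A with hQ
  set H : K →L[ℂ] K := B ∘L ContinuousLinearMap.adjoint B with hH
  have hABA' : ∀ x, A (B (A x)) = A x := fun x => by
    conv_rhs => rw [← hABA]
    rfl
  have hBW : ∀ x, B x ∈ (LinearMap.ker (A : K →ₗ[ℂ] K))ᗮ := fun x => hRan ▸ LinearMap.mem_range_self (B : K →ₗ[ℂ] K) x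
  have hkerB : ∀ x, x ∈ (LinearMap.range (A : K →ₗ[ℂ] K))ᗮ → B x = 0 := fun x hx => by
    have : x ∈ LinearMap.ker (B : K →ₗ[ℂ] K) := hKer ▸ hx
    simpa using this
  -- closed range submodule
  have hRAclosed : IsClosed ((LinearMap.range (A : K →ₗ[ℂ] K) : Submodule ℂ K) : Set K) := by
    have : ((LinearMap.range (A : K →ₗ[ℂ] K) : Submodule ℂ K) : Set K) = Set.range A := by
      ext y
      simp [LinearMap.mem_range, Set.mem_range]
    rw [this]
    exact hclosed
  haveI : CompleteSpace (LinearMap.range (A : K →ₗ[ℂ] K)) := hRAclosed.completeSpace_coe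
  have hyEy : ∀ y : K, y - A (B y) ∈ (LinearMap.range (A : K →ₗ[ℂ] K))ᗮ := by
    intro y
    obtain ⟨u, hu, v, hv, rfl⟩ := (LinearMap.range (A : K →ₗ[ℂ] K)).exists_add_mem_mem_orthogonal y
    obtain ⟨z, rfl⟩ := hu
    have hBv : B v = 0 := hkerB v hv
    have key : A (B (A z + v)) = A z := by
      rw [map_add, hBv, add_zero, hABA']
    rw [ContinuousLinearMap.coe_coe, key]
    simpa using hv
  have hBAB' : ∀ x, B (A (B x)) = B x := by
    intro x
    have h0 : B (x - A (B x)) = 0 := hkerB _ (hyEy x)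
    rw [map_sub, sub_eq_zero] at h0
    exact h0.symm
  have hQQ' : ∀ x, Q (Q x) = Q x := by
    intro x
    show B (A (B (A x))) = B (A x)
    exact hBAB' (A x)
  -- self-adjointness of Q
  have hQadj : ContinuousLinearMap.adjoint Q = Q := by
    symm
    rw [ContinuousLinearMap.eq_adjoint_iff]
    intro x y
    have hxk : x - Q x ∈ LinearMap.ker (A : K →ₗ[ℂ] K) := by
      rw [LinearMap.mem_ker, map_sub, sub_eq_zero]
      exact (hABA' x).symm
    have hyk : y - Q y ∈ LinearMap.ker (A : K →ₗ[ℂ] K) := by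
      rw [LinearMap.mem_ker, map_sub, sub_eq_zero]
      exact (hABA' y).symm
    have h1 : ⟪Q x, y - Q y⟫ = 0 :=
      (Submodule.mem_orthogonal' _ _).mp (hBW (A x)) _ hyk
    have h2 : ⟪x - Q x, Q y⟫ = 0 :=
      (Submodule.mem_orthogonal _ _).mp (hBW (A y)) _ hxk
    have e1 : ⟪Q x, y⟫ = ⟪Q x, Q y⟫ := by
      conv_lhs => rw [show y = Q y + (y - Q y) by abel]
      rw [inner_add_right, h1, add_zero]
    have e2 : ⟪x, Q y⟫ = ⟪Q x, Q y⟫ := by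
      conv_lhs => rw [show x = Q x + (x - Q x) by abel]
      rw [inner_add_left, h2, add_zero]
    rw [e1, e2]
  have hQsym : ∀ u v : K, ⟪Q u, v⟫ = ⟪u, Q v⟫ := by
    intro u v
    conv_lhs => rw [← hQadj]
    exact ContinuousLinearMap.adjoint_inner_left Q v u
  -- self-adjointness of E = A ∘L B
  have hEadj : ContinuousLinearMap.adjoint (A ∘L B) = A ∘L B := by
    symm
    rw [ContinuousLinearMap.eq_adjoint_iff]
    intro x y
    have h1 : ⟪(A ∘L B) x, y - (A ∘L B) y⟫ = 0 :=
      (Submodule.mem_orthogonal _ _).mp (hyEy y) _ (LinearMap.mem_range_self (A : K →ₗ[ℂ] K) (B x))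
    have h2 : ⟪x - (A ∘L B) x, (A ∘L B) y⟫ = 0 :=
      (Submodule.mem_orthogonal' _ _).mp (hyEy x) _ (LinearMap.mem_range_self (A : K →ₗ[ℂ] K) (B y))
    have e1 : ⟪(A ∘L B) x, y⟫ = ⟪(A ∘L B) x, (A ∘L B) y⟫ := by
      conv_lhs => rw [show y = (A ∘L B) y + (y - (A ∘L B) y) by abel]
      rw [inner_add_right, h1, add_zero]
    have e2 : ⟪x, (A ∘L B) y⟫ = ⟪(A ∘L B) x, (A ∘L B) y⟫ := by
      conv_lhs => rw [show x = (A ∘L B) x + (x - (A ∘L B) x) by abel]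
      rw [inner_add_left, h2, add_zero]
    rw [e1, e2]
  -- lower bound for A on W
  set W := (LinearMap.ker (A : K →ₗ[ℂ] K))ᗮ with hWdef
  haveI : CompleteSpace W := (Submodule.isClosed_orthogonal _).completeSpace_coe
  set A₁ : W →L[ℂ] K := A.comp (Submodule.subtypeL W) with hA₁
  have hA₁mem : ∀ u : W, A₁ u ∈ LinearMap.range (A : K →ₗ[ℂ] K) := fun u => LinearMap.mem_range_self _ _
  set A₂ : W →L[ℂ] (LinearMap.range (A : K →ₗ[ℂ] K)) := A₁.codRestrict _ hA₁mem with hA₂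
  have hker₂ : LinearMap.ker (A₂ : W →ₗ[ℂ] LinearMap.range (A : K →ₗ[ℂ] K)) = ⊥ := by
    rw [LinearMap.ker_eq_bot']
    intro u hu
    have hAu : A (u : K) = 0 := congrArg Subtype.val hu
    have huk : (u : K) ∈ LinearMap.ker (A : K →ₗ[ℂ] K) := hAu
    have h0 : ⟪(u:K), (u:K)⟫ = 0 := (Submodule.mem_orthogonal _ _).mp u.2 _ huk
    exact Subtype.ext (inner_self_eq_zero.mp h0)
  have hrange₂ : LinearMap.range (A₂ : W →ₗ[ℂ] LinearMap.range (A : K →ₗ[ℂ] K)) = ⊤ := by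
    rw [LinearMap.range_eq_top]
    rintro ⟨y, hy⟩
    obtain ⟨x, rfl⟩ := hy
    exact ⟨⟨B (A x), hBW (A x)⟩, Subtype.ext (hABA' x)⟩
  set e := ContinuousLinearEquiv.ofBijective A₂ hker₂ hrange₂ with he
  set C₀ : ℝ := ‖(e.symm : (LinearMap.range (A : K →ₗ[ℂ] K)) →L[ℂ] W)‖ with hC₀
  have hC₀0 : 0 ≤ C₀ := norm_nonneg _
  have hlow : ∀ u : K, u ∈ W → ‖u‖ ≤ (C₀ + 1) * ‖A u‖ := by
    intro u hu
    set uu : W := ⟨u, hu⟩ with huu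
    have h2 : ‖uu‖ ≤ C₀ * ‖e uu‖ := by
      have h2' := (e.symm : (LinearMap.range (A : K →ₗ[ℂ] K)) →L[ℂ] W).le_opNorm (e uu)
      rw [ContinuousLinearEquiv.coe_coe, e.symm_apply_apply] at h2'
      exact h2'
    have h3 : ‖e uu‖ = ‖A u‖ := by
      have e0 : e uu = A₂ uu := by
        rw [he]
        exact congrFun (ContinuousLinearEquiv.coeFn_ofBijective A₂ hker₂ hrange₂) uu
      have e1 : ((e uu : LinearMap.range (A : K →ₗ[ℂ] K)) : K) = A u := by
        rw [e0, hA₂, ContinuousLinearMap.coe_codRestrict_apply]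
        rfl
      rw [Submodule.coe_norm, e1]
    have h4 : ‖u‖ = ‖uu‖ := (Submodule.coe_norm uu).symm
    rw [h4, ← h3]
    refine h2.trans (mul_le_mul_of_nonneg_right ?_ (norm_nonneg _))
    linarith
  set δ : ℝ := ((C₀+1)^2)⁻¹ with hδdef
  have hδ0 : 0 < δ := by positivity
  have hδle : ∀ u : K, u ∈ W → δ * ‖u‖^2 ≤ ‖A u‖^2 := by
    intro u hu
    have h1 := hlow u hu
    have h2 : ‖u‖^2 ≤ ((C₀+1) * ‖A u‖)^2 :=
      pow_le_pow_left₀ (norm_nonneg u) h1 2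
    rw [mul_pow] at h2
    rw [hδdef, inv_mul_le_iff₀ (by positivity)]
    exact h2
  set c : ℝ := ‖T‖ with hcdef
  have hc0' : 0 ≤ c := norm_nonneg _
  have hinner : ∀ u : K, ⟪T u, u⟫ = ((‖A u‖ : ℂ))^2 := by
    intro u
    show ⟪ContinuousLinearMap.adjoint A (A u), u⟫ = _
    rw [ContinuousLinearMap.adjoint_inner_left]
    exact inner_self_eq_norm_sq_to_K (A u)
  have hreTuu : ∀ u : K, Complex.re ⟪T u, u⟫ = ‖A u‖^2 := by
    intro u
    rw [hinner]
    rw [← Complex.ofReal_pow]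
    exact Complex.ofReal_re _
  have hAT : ∀ u : K, ‖A u‖^2 ≤ c * ‖u‖^2 := by
    intro u
    have h1 : ‖A u‖^2 = Complex.re ⟪T u, u⟫ := (hreTuu u).symm
    have h2 : Complex.re ⟪T u, u⟫ ≤ ‖T u‖ * ‖u‖ := by
      refine (Complex.re_le_norm _).trans ?_
      exact norm_inner_le_norm _ _
    have h3 : ‖T u‖ ≤ c * ‖u‖ := T.le_opNorm u
    calc ‖A u‖^2 = Complex.re ⟪T u, u⟫ := h1
    _ ≤ ‖T u‖ * ‖u‖ := h2
    _ ≤ (c * ‖u‖) * ‖u‖ := mul_le_mul_of_nonneg_right h3 (norm_nonneg u)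
    _ = c * ‖u‖^2 := by ring
  have hTA : ∀ u : K, ‖T u‖^2 ≤ c * ‖A u‖^2 := by
    intro u
    have h1 : ⟪T u, T u⟫ = ⟪A u, A (T u)⟫ := by
      show ⟪ContinuousLinearMap.adjoint A (A u), T u⟫ = _
      rw [ContinuousLinearMap.adjoint_inner_left]
    have h2 : ‖T u‖^2 ≤ ‖A u‖ * ‖A (T u)‖ := by
      have e1 : (‖T u‖:ℝ)^2 = Complex.re ⟪T u, T u⟫ := by
        simpa using (inner_self_eq_norm_sq (𝕜 := ℂ) (T u)).symm
      rw [e1, h1]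
      refine (Complex.re_le_norm _).trans ?_
      exact norm_inner_le_norm _ _
    have h3 : ‖A (T u)‖^2 ≤ c * ‖T u‖^2 := hAT (T u)
    exact real_aux1 _ _ _ _ (norm_nonneg _) (norm_nonneg _) (norm_nonneg _) hc0' h2 h3
  -- positivity of c and δ ≤ c
  obtain ⟨u₁, hu₁W, hAu₁⟩ : ∃ u₁ : K, u₁ ∈ W ∧ A u₁ = A x₀ :=
    ⟨B (A x₀), hBW (A x₀), hABA' x₀⟩
  have hAu₁0 : 0 < ‖A u₁‖ := by
    rw [hAu₁]
    exact norm_pos_iff.mpr hx₀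
  have hu₁0 : 0 < ‖u₁‖ := by
    rcases eq_or_lt_of_le (norm_nonneg u₁) with h | h
    · exfalso
      have : u₁ = 0 := norm_eq_zero.mp h.symm
      rw [this, map_zero, norm_zero] at hAu₁0
      exact lt_irrefl _ hAu₁0
    · exact h
  have hc0 : 0 < c := real_aux3 _ ‖u₁‖ _ hAu₁0 (hAT u₁)
  have hδc : δ ≤ c := real_aux4 _ _ _ hu₁0 ((hδle u₁ hu₁W).trans (hAT u₁))
  -- the shifted operator V
  set ρ : ℝ := Real.sqrt (c * (c - δ)) with hρdef
  have hcδ : 0 ≤ c - δ := by linarith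
  have hρ0 : 0 ≤ ρ := Real.sqrt_nonneg _
  have hρsq : ρ^2 = c * (c - δ) := Real.sq_sqrt (by positivity)
  have hρc : ρ < c := real_aux5 _ _ _ hρ0 hδ0 hδc hρsq
  set R : ℝ := (ρ + c)/2 with hRdef
  have hρR : ρ < R := by rw [hRdef]; linarith
  have hRc : R < c := by rw [hRdef]; linarith
  have hR0 : 0 < R := by linarith
  set V : K →L[ℂ] K := T - (c : ℂ) • Q with hVdef
  have hQW : ∀ x : K, Q x ∈ W := fun x => hBW (A x)
  have hTW : ∀ u : K, T u ∈ W := by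
    intro u
    rw [hWdef, Submodule.mem_orthogonal]
    intro v hv
    have hAv : A v = 0 := hv
    show ⟪v, ContinuousLinearMap.adjoint A (A u)⟫ = 0
    rw [ContinuousLinearMap.adjoint_inner_right, hAv, inner_zero_left]
  have hVapp : ∀ x : K, V x = T x - (c:ℂ) • Q x := by
    intro x
    rw [hVdef]
    rfl
  have hVW : ∀ x : K, V x ∈ W := by
    intro x
    rw [hVapp]
    exact Submodule.sub_mem _ (hTW x) (Submodule.smul_mem _ _ (hQW x))
  have hQu : ∀ u : K, u ∈ W → Q u = u := by
    intro u hu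
    have : u ∈ LinearMap.range (B : K →ₗ[ℂ] K) := by rw [hRan]; exact hu
    obtain ⟨x, rfl⟩ := this
    exact hBAB' x
  have hTQ' : ∀ x : K, T (Q x) = T x := by
    intro x
    show ContinuousLinearMap.adjoint A (A (B (A x))) = ContinuousLinearMap.adjoint A (A x)
    rw [hABA']
  have hQcontr : ∀ x : K, ‖Q x‖ ≤ ‖x‖ := by
    intro x
    have h1 : ⟪Q x, Q x⟫ = ⟪x, Q x⟫ := by
      rw [hQsym x (Q x), hQQ']
    have h2 : (‖Q x‖:ℝ)^2 = Complex.re ⟪x, Q x⟫ := by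
      rw [← h1]
      simpa using (inner_self_eq_norm_sq (𝕜 := ℂ) (Q x)).symm
    have h3 : Complex.re ⟪x, Q x⟫ ≤ ‖x‖ * ‖Q x‖ := by
      refine (Complex.re_le_norm _).trans ?_
      exact norm_inner_le_norm _ _
    refine real_aux2 _ _ (norm_nonneg _) (norm_nonneg _) ?_
    rw [h2]
    exact h3
  have hVu : ∀ u : K, u ∈ W → ‖V u‖ ≤ ρ * ‖u‖ := by
    intro u hu
    have hVapp2 : V u = T u - (c:ℂ) • u := by rw [hVapp, hQu u hu]
    have hns : ‖T u - (c:ℂ) • u‖^2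
        = ‖T u‖^2 - 2 * Complex.re ⟪T u, (c:ℂ) • u⟫ + ‖(c:ℂ) • u‖^2 := by
      exact norm_sub_sq (𝕜 := ℂ) (T u) ((c:ℂ) • u)
    have hre : Complex.re ⟪T u, (c:ℂ) • u⟫ = c * ‖A u‖^2 := by
      rw [inner_smul_right, hinner]
      rw [← Complex.ofReal_pow, ← Complex.ofReal_mul]
      exact Complex.ofReal_re _
    have hsm : ‖(c:ℂ) • u‖^2 = c^2 * ‖u‖^2 := by
      rw [norm_smul, Complex.norm_real, Real.norm_eq_abs, abs_of_pos hc0, mul_pow]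
    have hVu2 : ‖V u‖^2 ≤ (ρ * ‖u‖)^2 := by
      rw [hVapp2, hns, hre, hsm, mul_pow]
      exact real_aux6 _ _ _ _ _ _ hc0' (hTA u) (hδle u hu) hρsq
    have := Real.sqrt_le_sqrt hVu2
    rwa [Real.sqrt_sq (norm_nonneg _), Real.sqrt_sq (by positivity)] at this
  have hVQ : ∀ x : K, V (Q x) = V x := by
    intro x
    rw [hVapp, hVapp, hTQ', hQQ']
  have hVnorm : ‖V‖ ≤ ρ := by
    apply ContinuousLinearMap.opNorm_le_bound V hρ0
    intro x
    calc ‖V x‖ = ‖V (Q x)‖ := by rw [hVQ]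
    _ ≤ ρ * ‖Q x‖ := hVu _ (hQW x)
    _ ≤ ρ * ‖x‖ := mul_le_mul_of_nonneg_left (hQcontr x) hρ0
  -- operator-level identities
  have hQQop : Q * Q = Q := ContinuousLinearMap.ext hQQ'
  have hTQop : T * Q = T := ContinuousLinearMap.ext hTQ'
  have hQTop : Q * T = T := ContinuousLinearMap.ext fun x => hQu _ (hTW x)
  have hVQop : V * Q = V := ContinuousLinearMap.ext hVQ
  have hQVop : Q * V = V := ContinuousLinearMap.ext fun x => hQu _ (hVW x)
  have hQHop : Q * H = H := ContinuousLinearMap.ext fun x => hQu _ (hBW _)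
  have hABeq : A ∘L B = ContinuousLinearMap.adjoint B ∘L ContinuousLinearMap.adjoint A := by
    conv_lhs => rw [← hEadj]
    rw [ContinuousLinearMap.adjoint_comp]
  have hQeq : ContinuousLinearMap.adjoint A ∘L ContinuousLinearMap.adjoint B = Q := by
    rw [← ContinuousLinearMap.adjoint_comp B A]
    exact hQadj
  have hTHop : T * H = Q := by
    calc T * H = ContinuousLinearMap.adjoint A ∘L ((A ∘L B) ∘L ContinuousLinearMap.adjoint B) := by
          ext x; rfl
    _ = ContinuousLinearMap.adjoint A ∘L ((ContinuousLinearMap.adjoint B ∘L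
          ContinuousLinearMap.adjoint A) ∘L ContinuousLinearMap.adjoint B) := by rw [hABeq]
    _ = (ContinuousLinearMap.adjoint A ∘L ContinuousLinearMap.adjoint B) ∘L
          (ContinuousLinearMap.adjoint A ∘L ContinuousLinearMap.adjoint B) := by ext x; rfl
    _ = Q ∘L Q := by rw [hQeq]
    _ = Q := hQQop
  -- the element t of the algebra
  set t : 𝔄 := star a * a with ht
  have hιt : ι t = T := by
    rw [ht, map_mul, map_star, ha, hT]
    rw [ContinuousLinearMap.star_eq_adjoint]
    rfl
  have hι1 : ∀ z : ℂ, ι ((z:ℂ) • 1 - t) = (z:ℂ) • 1 - T := by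
    intro z
    rw [map_sub, map_smul, map_one, hιt]
  have hzne0 : ∀ z ∈ sphere (c:ℂ) R, z ≠ 0 := by
    intro z hz h0
    rw [mem_sphere_iff_norm, h0, zero_sub, norm_neg, Complex.norm_real,
      Real.norm_eq_abs, abs_of_pos hc0] at hz
    exact (ne_of_gt hRc) hz
  have hVR : ‖V‖ < R := lt_of_le_of_lt hVnorm hρR
  -- resolvent identities in B(K)
  have hres : ∀ z ∈ sphere (c:ℂ) R,
      (((z:ℂ) • (1:K →L[ℂ] K) - T) *
        (z⁻¹ • ((1:K →L[ℂ] K) - Q) + Ring.inverse ((z - (c:ℂ)) • (1:K →L[ℂ] K) - V) * Q) = 1)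
      ∧ ((z⁻¹ • ((1:K →L[ℂ] K) - Q) + Ring.inverse ((z - (c:ℂ)) • (1:K →L[ℂ] K) - V) * Q) *
          ((z:ℂ) • (1:K →L[ℂ] K) - T) = 1) := by
    intro z hz
    have hz' := hz
    rw [mem_sphere_iff_norm] at hz'
    have hVz : ‖V‖ < ‖z - (c:ℂ)‖ := by rw [hz']; exact hVR
    have hz0 : z ≠ 0 := hzne0 z hz
    set M : K →L[ℂ] K := (z - (c:ℂ)) • (1:K →L[ℂ] K) - V with hM
    set Nz : K →L[ℂ] K := Ring.inverse M with hNzdef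
    have hNl : M * Nz = 1 := Ring.mul_inverse_cancel _ (aux_isUnit V hVz)
    have hNr : Nz * M = 1 := Ring.inverse_mul_cancel _ (aux_isUnit V hVz)
    have hQM : Q * M = M * Q := by
      ext x
      show Q (M x) = M (Q x)
      rw [hM]
      simp only [ContinuousLinearMap.sub_apply, ContinuousLinearMap.smul_apply,
        ContinuousLinearMap.one_apply, map_sub, map_smul]
      rw [hQu _ (hVW x), hVQ x]
    have hNQ : Nz * Q = Q * Nz := by
      have e1 : Nz * Q = Nz * Q * (M * Nz) := by rw [hNl, mul_one]
      have e2 : Nz * Q * (M * Nz) = Nz * (Q * M) * Nz := by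
        rw [← mul_assoc (Nz * Q) M Nz, mul_assoc Nz Q M]
      have e3 : Nz * (Q * M) * Nz = (Nz * M) * (Q * Nz) := by
        rw [hQM, ← mul_assoc Nz M Q, mul_assoc (Nz * M) Q Nz]
      rw [e1, e2, e3, hNr, one_mul]
    have hkey1 : ((z:ℂ) • (1:K →L[ℂ] K) - T) * Q = M * Q := by
      ext x
      show ((z:ℂ) • (1:K →L[ℂ] K) - T) (Q x) = M (Q x)
      rw [hM]
      simp only [ContinuousLinearMap.sub_apply, ContinuousLinearMap.smul_apply,
        ContinuousLinearMap.one_apply]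
      rw [hTQ' x, hVQ x, hVapp x, sub_smul]
      abel
    have hkey2 : Q * ((z:ℂ) • (1:K →L[ℂ] K) - T) = M * Q := by
      ext x
      show Q (((z:ℂ) • (1:K →L[ℂ] K) - T) x) = M (Q x)
      rw [hM]
      simp only [ContinuousLinearMap.sub_apply, ContinuousLinearMap.smul_apply,
        ContinuousLinearMap.one_apply, map_sub, map_smul]
      rw [hQu _ (hTW x), hVQ x, hVapp x, sub_smul]
      abel
    have hTP : T * ((1:K →L[ℂ] K) - Q) = 0 := by rw [mul_sub, mul_one, hTQop, sub_self]
    have hPT : ((1:K →L[ℂ] K) - Q) * T = 0 := by rw [sub_mul, one_mul, hQTop, sub_self]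
    constructor
    · rw [mul_add]
      have p1 : ((z:ℂ) • (1:K →L[ℂ] K) - T) * (z⁻¹ • ((1:K →L[ℂ] K) - Q))
          = (1:K →L[ℂ] K) - Q := by
        rw [mul_smul_comm, sub_mul, hTP, sub_zero, smul_mul_assoc, one_mul, smul_smul,
          inv_mul_cancel₀ hz0, one_smul]
      have p2 : ((z:ℂ) • (1:K →L[ℂ] K) - T) * (Nz * Q) = Q := by
        calc ((z:ℂ) • (1:K →L[ℂ] K) - T) * (Nz * Q)
            = ((z:ℂ) • (1:K →L[ℂ] K) - T) * (Q * Nz) := by rw [hNQ]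
        _ = (((z:ℂ) • (1:K →L[ℂ] K) - T) * Q) * Nz := by rw [mul_assoc]
        _ = (M * Q) * Nz := by rw [hkey1]
        _ = M * (Q * Nz) := by rw [mul_assoc]
        _ = M * (Nz * Q) := by rw [hNQ]
        _ = (M * Nz) * Q := by rw [mul_assoc]
        _ = Q := by rw [hNl, one_mul]
      rw [p1, p2, sub_add_cancel]
    · rw [add_mul]
      have p1 : (z⁻¹ • ((1:K →L[ℂ] K) - Q)) * ((z:ℂ) • (1:K →L[ℂ] K) - T)
          = (1:K →L[ℂ] K) - Q := by
        rw [smul_mul_assoc, mul_sub, hPT, sub_zero, mul_smul_comm, mul_one, smul_smul,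
          inv_mul_cancel₀ hz0, one_smul]
      have p2 : (Nz * Q) * ((z:ℂ) • (1:K →L[ℂ] K) - T) = Q := by
        calc (Nz * Q) * ((z:ℂ) • (1:K →L[ℂ] K) - T)
            = Nz * (Q * ((z:ℂ) • (1:K →L[ℂ] K) - T)) := by rw [mul_assoc]
        _ = Nz * (M * Q) := by rw [hkey2]
        _ = (Nz * M) * Q := by rw [mul_assoc]
        _ = Q := by rw [hNr, one_mul]
      rw [p1, p2, sub_add_cancel]
  -- units in the algebra
  have hunit : ∀ z ∈ sphere (c:ℂ) R, IsUnit ((z:ℂ) • (1:𝔄) - t) ∧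
      ι (Ring.inverse ((z:ℂ) • (1:𝔄) - t))
        = z⁻¹ • ((1:K →L[ℂ] K) - Q) + Ring.inverse ((z - (c:ℂ)) • (1:K →L[ℂ] K) - V) * Q := by
    intro z hz
    obtain ⟨h1, h2⟩ := hres z hz
    set Rz : K →L[ℂ] K :=
      z⁻¹ • ((1:K →L[ℂ] K) - Q) + Ring.inverse ((z - (c:ℂ)) • (1:K →L[ℂ] K) - V) * Q with hRz
    have hmem : Rz ∈ Set.range ι := by
      apply hinvcl ((z:ℂ) • (1:𝔄) - t) Rz
      · rw [hι1]; exact h1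
      · rw [hι1]; exact h2
    obtain ⟨g, hg⟩ := hmem
    have hgl : ((z:ℂ) • (1:𝔄) - t) * g = 1 := by
      apply hinj
      rw [map_mul, map_one, hι1, hg]
      exact h1
    have hgr : g * ((z:ℂ) • (1:𝔄) - t) = 1 := by
      apply hinj
      rw [map_mul, map_one, hι1, hg]
      exact h2
    set u : 𝔄ˣ := ⟨(z:ℂ) • (1:𝔄) - t, g, hgl, hgr⟩ with hu
    have hIsU : IsUnit ((z:ℂ) • (1:𝔄) - t) := ⟨u, rfl⟩
    refine ⟨hIsU, ?_⟩
    have : Ring.inverse ((z:ℂ) • (1:𝔄) - t) = g := by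
      have := Ring.inverse_unit u
      exact this
    rw [this, hg]
  -- continuity and integrability of the 𝔄-valued integrand
  have hGcont : ContinuousOn (fun z : ℂ => Ring.inverse ((z:ℂ) • (1:𝔄) - t)) (sphere (c:ℂ) R) := by
    intro z hz
    have hu := (hunit z hz).1
    have hcont : Continuous (fun z : ℂ => (z:ℂ) • (1:𝔄) - t) :=
      (continuous_id.smul continuous_const).sub continuous_const
    have : ContinuousAt (fun z : ℂ => Ring.inverse ((z:ℂ) • (1:𝔄) - t)) z := by
      apply ContinuousAt.comp (g := Ring.inverse)
      · rw [← hu.unit_spec]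
        exact NormedRing.inverse_continuousAt hu.unit
      · exact hcont.continuousAt
    exact this.continuousWithinAt
  have hGint : CircleIntegrable (fun z : ℂ => z⁻¹ • Ring.inverse ((z:ℂ) • (1:𝔄) - t)) (c:ℂ) R := by
    apply ContinuousOn.circleIntegrable hR0.le
    exact (continuousOn_id.inv₀ hzne0).smul hGcont
  -- the continuous inclusion as a continuous linear map
  obtain ⟨Cb, hCb⟩ := hbdd
  set ιL : 𝔄 →L[ℂ] (K →L[ℂ] K) :=
    LinearMap.mkContinuousOfExistsBound (ι.toAlgHom.toLinearMap) ⟨Cb, hCb⟩ with hιL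
  have hιLapp : ∀ x : 𝔄, ιL x = ι x := fun x => rfl
  -- push ι through the circle integral
  have hpush : ι (∮ z in C((c:ℂ), R), z⁻¹ • Ring.inverse ((z:ℂ) • (1:𝔄) - t))
      = ∮ z in C((c:ℂ), R), z⁻¹ • ι (Ring.inverse ((z:ℂ) • (1:𝔄) - t)) := by
    rw [← hιLapp]
    show ιL (∫ θ in (0:ℝ)..(2 * Real.pi),
        deriv (circleMap (c:ℂ) R) θ • ((circleMap (c:ℂ) R θ)⁻¹ •
          Ring.inverse ((circleMap (c:ℂ) R θ : ℂ) • (1:𝔄) - t))) = _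
    rw [← ContinuousLinearMap.intervalIntegral_comp_comm ιL hGint.out]
    show (∫ θ in (0:ℝ)..(2 * Real.pi), ιL (deriv (circleMap (c:ℂ) R) θ •
        ((circleMap (c:ℂ) R θ)⁻¹ •
          Ring.inverse ((circleMap (c:ℂ) R θ : ℂ) • (1:𝔄) - t)))) = _
    congr 1
    funext θ
    rw [map_smul, map_smul]
    rfl
  -- the three-part decomposition of the integrand
  have hNcont : ContinuousOn (fun z : ℂ => Ring.inverse ((z - (c:ℂ)) • (1:K →L[ℂ] K) - V))
      (sphere (c:ℂ) R) := aux_cont_inverse V (c:ℂ) hVR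
  have hdecomp : Set.EqOn (fun z : ℂ => z⁻¹ • ι (Ring.inverse ((z:ℂ) • (1:𝔄) - t)))
      (fun z : ℂ => (z⁻¹ * z⁻¹) • ((1:K →L[ℂ] K) - Q)
        + (Ring.inverse ((z - (c:ℂ)) • (1:K →L[ℂ] K) - V) * H - z⁻¹ • H))
      (sphere (c:ℂ) R) := by
    intro z hz
    have hz' := hz
    rw [mem_sphere_iff_norm] at hz'
    have hVz : ‖V‖ < ‖z - (c:ℂ)‖ := by rw [hz']; exact hVR
    have hz0 : z ≠ 0 := hzne0 z hz
    obtain ⟨h1, h2⟩ := hres z hz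
    show z⁻¹ • ι (Ring.inverse ((z:ℂ) • (1:𝔄) - t))
      = (z⁻¹ * z⁻¹) • ((1:K →L[ℂ] K) - Q)
        + (Ring.inverse ((z - (c:ℂ)) • (1:K →L[ℂ] K) - V) * H - z⁻¹ • H)
    rw [(hunit z hz).2]
    set Nz : K →L[ℂ] K := Ring.inverse ((z - (c:ℂ)) • (1:K →L[ℂ] K) - V) with hNzdef
    set Rz : K →L[ℂ] K := z⁻¹ • ((1:K →L[ℂ] K) - Q) + Nz * Q with hRzdef
    -- Rz * H = Nz * H
    have hPH : ((1:K →L[ℂ] K) - Q) * H = 0 := by rw [sub_mul, one_mul, hQHop, sub_self]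
    have hRH : Rz * H = Nz * H := by
      rw [hRzdef, add_mul, smul_mul_assoc, hPH, smul_zero, zero_add, mul_assoc, hQHop]
    -- Rz * Q = Nz * Q
    have hPQ : ((1:K →L[ℂ] K) - Q) * Q = 0 := by rw [sub_mul, one_mul, hQQop, sub_self]
    have hRQ : Rz * Q = Nz * Q := by
      rw [hRzdef, add_mul, smul_mul_assoc, hPQ, smul_zero, zero_add, mul_assoc, hQQop]
    -- Rz * T = z • Rz - 1
    have hRT : Rz * T = (z:ℂ) • Rz - 1 := by
      have h2' := h2
      rw [mul_sub, mul_smul_comm, mul_one, sub_eq_iff_eq_add] at h2'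
      rw [h2']
      abel
    -- Nz * Q = z • (Nz * H) - H
    have hNzQ : Nz * Q = (z:ℂ) • (Nz * H) - H := by
      have e1 : Nz * Q = Rz * Q := hRQ.symm
      have e2 : Rz * Q = Rz * (T * H) := by rw [hTHop]
      have e3 : Rz * (T * H) = (Rz * T) * H := by rw [mul_assoc]
      have e4 : (Rz * T) * H = ((z:ℂ) • Rz - 1) * H := by rw [hRT]
      have e5 : ((z:ℂ) • Rz - 1) * H = (z:ℂ) • (Rz * H) - H := by
        rw [sub_mul, smul_mul_assoc, one_mul]
      rw [e1, e2, e3, e4, e5, hRH]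
    show z⁻¹ • Rz = (z⁻¹ * z⁻¹) • ((1:K →L[ℂ] K) - Q) + (Nz * H - z⁻¹ • H)
    rw [hRzdef, smul_add, hNzQ]
    match_scalars <;> field_simp
  -- integrability of the pieces
  have hIcont1 : CircleIntegrable (fun z : ℂ => (z⁻¹ * z⁻¹) • ((1:K →L[ℂ] K) - Q)) (c:ℂ) R := by
    apply ContinuousOn.circleIntegrable hR0.le
    exact ((continuousOn_id.inv₀ hzne0).mul (continuousOn_id.inv₀ hzne0)).smul continuousOn_const
  have hIcont2a : CircleIntegrable
      (fun z : ℂ => Ring.inverse ((z - (c:ℂ)) • (1:K →L[ℂ] K) - V) * H) (c:ℂ) R := by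
    apply ContinuousOn.circleIntegrable hR0.le
    exact hNcont.mul continuousOn_const
  have hIcont2b : CircleIntegrable (fun z : ℂ => z⁻¹ • H) (c:ℂ) R := by
    apply ContinuousOn.circleIntegrable hR0.le
    exact (continuousOn_id.inv₀ hzne0).smul continuousOn_const
  have hIcont2 : CircleIntegrable
      (fun z : ℂ => Ring.inverse ((z - (c:ℂ)) • (1:K →L[ℂ] K) - V) * H - z⁻¹ • H) (c:ℂ) R :=
    hIcont2a.sub hIcont2b
  -- ∮ z⁻¹ = 0 since 0 is outside the disc
  have h0notin : ∀ x : ℂ, x ∈ closedBall (c:ℂ) R → x ≠ 0 := by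
    intro x hx h0
    rw [mem_closedBall, h0] at hx
    have : dist (0:ℂ) (c:ℂ) = c := by
      rw [dist_eq_norm, zero_sub, norm_neg, Complex.norm_real, Real.norm_eq_abs,
        abs_of_pos hc0]
    rw [this] at hx
    linarith
  have hint_inv : (∮ z in C((c:ℂ), R), z⁻¹) = 0 := by
    apply Complex.circleIntegral_eq_zero_of_differentiable_on_off_countable hR0.le
      Set.countable_empty
    · exact ContinuousOn.inv₀ continuousOn_id h0notin
    · intro x hx
      exact DifferentiableAt.inv differentiableAt_id (h0notin x (ball_subset_closedBall hx.1))
  have hint_inv2 : (∮ z in C((c:ℂ), R), z⁻¹ * z⁻¹) = 0 := by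
    have heq : Set.EqOn (fun z : ℂ => z⁻¹ * z⁻¹) (fun z : ℂ => (z - 0) ^ (-2 : ℤ))
        (sphere (c:ℂ) R) := by
      intro z hz
      have hz0 : z ≠ 0 := hzne0 z hz
      show z⁻¹ * z⁻¹ = (z - 0) ^ (-2 : ℤ)
      rw [sub_zero, zpow_neg, ← inv_zpow]
      rw [show ((2:ℤ)) = ((2:ℕ):ℤ) by norm_num, zpow_natCast]
      rw [sq]
    rw [circleIntegral.integral_congr hR0.le heq,
      circleIntegral.integral_sub_zpow_of_ne (by decide) _ _ _]
  -- the resolvent integral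
  have hres_int : (∮ z in C((c:ℂ), R), Ring.inverse ((z - (c:ℂ)) • (1:K →L[ℂ] K) - V))
      = (2 * Real.pi * Complex.I : ℂ) • (1:K →L[ℂ] K) :=
    aux_circleIntegral_resolvent V (c:ℂ) hVR
  have hNint : CircleIntegrable
      (fun z : ℂ => Ring.inverse ((z - (c:ℂ)) • (1:K →L[ℂ] K) - V)) (c:ℂ) R :=
    hNcont.circleIntegrable hR0.le
  have hresH : (∮ z in C((c:ℂ), R), Ring.inverse ((z - (c:ℂ)) • (1:K →L[ℂ] K) - V) * H)
      = (2 * Real.pi * Complex.I : ℂ) • H := by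
    set φ : (K →L[ℂ] K) →L[ℂ] (K →L[ℂ] K) :=
      (ContinuousLinearMap.mul ℂ (K →L[ℂ] K)).flip H with hφ
    have hφapp : ∀ X : K →L[ℂ] K, φ X = X * H := fun X => rfl
    have step1 : (∮ z in C((c:ℂ), R), Ring.inverse ((z - (c:ℂ)) • (1:K →L[ℂ] K) - V) * H)
        = φ (∮ z in C((c:ℂ), R), Ring.inverse ((z - (c:ℂ)) • (1:K →L[ℂ] K) - V)) := by
      simp only [circleIntegral]
      rw [← ContinuousLinearMap.intervalIntegral_comp_comm φ hNint.out]
      congr 1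
    rw [step1, hres_int, hφapp, smul_mul_assoc, one_mul]
  -- total value of the integral
  have hJ : (∮ z in C((c:ℂ), R), z⁻¹ • ι (Ring.inverse ((z:ℂ) • (1:𝔄) - t)))
      = (2 * Real.pi * Complex.I : ℂ) • H := by
    rw [circleIntegral.integral_congr hR0.le hdecomp]
    rw [aux_circle_add hIcont1 hIcont2]
    rw [circleIntegral.integral_sub hIcont2a hIcont2b]
    rw [circleIntegral.integral_smul_const, circleIntegral.integral_smul_const,
      hint_inv, hint_inv2, hresH, zero_smul, zero_smul, zero_add, sub_zero]
  -- final assembly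
  refine ⟨((2 * Real.pi * Complex.I : ℂ)⁻¹ •
      ∮ z in C((c:ℂ), R), z⁻¹ • Ring.inverse ((z:ℂ) • (1:𝔄) - t)) * star a, ?_⟩
  rw [map_mul, map_smul, hpush, hJ, map_star, ha]
  rw [smul_smul, inv_mul_cancel₀ Complex.two_pi_I_ne_zero, one_smul]
  rw [ContinuousLinearMap.star_eq_adjoint]
  calc H * ContinuousLinearMap.adjoint A
      = B ∘L (ContinuousLinearMap.adjoint B ∘L ContinuousLinearMap.adjoint A) := by ext x; rfl
  _ = B ∘L (A ∘L B) := by rw [← hABeq]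
  _ = B := ContinuousLinearMap.ext hBAB'
end

section
/- Let T = (T_k)_{k∈X} be a g-frame for H with canonical dual g-frame T̃ = (T_k S_T^{-1})_{k∈X}. Then the g-Gram matrix G_T has closed range in ℓ²(X;H), G_{T̃} is the Moore–Penrose pseudo-inverse of G_T (i.e., ker(G_{T̃}) = ran(G_T)^⊥, ran(G_{T̃}) = ker(G_T)^⊥, and G_T G_{T̃} G_T = G_T), and the mixed g-Gram matrix satisfies G_{T,T̃} = G_T G_{T̃}. -/
noncomputable section

open scoped ENNReal

namespace OVFrame

/-- `ℓ²(X;H)`. -/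
abbrev L2 (X : Type*) (H : Type*) [NormedAddCommGroup H] [InnerProductSpace ℂ H] :
    Type _ :=
  lp (fun _ : X => H) 2

variable {X : Type*} [Countable X]
variable {H : Type*} [NormedAddCommGroup H] [InnerProductSpace ℂ H] [CompleteSpace H]

/-- g-frame with bounds `A ≤ B`. -/
def IsGFrame (T : X → H →L[ℂ] H) (A B : ℝ) : Prop :=
  0 < A ∧ A ≤ B ∧
    ∀ f : H, Summable (fun k => ‖T k f‖ ^ 2) ∧
      A * ‖f‖ ^ 2 ≤ ∑' k, ‖T k f‖ ^ 2 ∧ ∑' k, ‖T k f‖ ^ 2 ≤ B * ‖f‖ ^ 2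

open ContinuousLinearMap

set_option maxHeartbeats 1000000 in
/-- **The canonical dual g-Gram matrix is the pseudo-inverse of the g-Gram matrix.**
Let `T` be a g-frame with analysis operator `C` (so the synthesis operator is
`D_T = C*`, the g-frame operator is `S_T = C* ∘ C`, with inverse `Sinv`), and let
`C̃` be the analysis operator of the canonical dual g-frame `T̃ = (T_k ∘ S_T⁻¹)`.
Then the g-Gram matrix `G_T = C ∘ C*` has closed range, `G_{T̃} = C̃ ∘ C̃*` is the
Moore–Penrose pseudo-inverse of `G_T` (i.e. `ker G_{T̃} = (ran G_T)ᗮ`,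
`ran G_{T̃} = (ker G_T)ᗮ`, `G_T G_{T̃} G_T = G_T`), and the mixed g-Gram matrix
satisfies `G_{T,T̃} = C ∘ C̃* = G_T G_{T̃}`. -/
theorem gram_canonicalDual_eq_pseudoInverse
    (T : X → H →L[ℂ] H) (A B : ℝ) (hT : IsGFrame T A B)
    (C : H →L[ℂ] L2 X H) (hC : ∀ (f : H) (k : X), (C f) k = T k f)
    (Sinv : H →L[ℂ] H)
    (hS1 : ((adjoint C) ∘L C) ∘L Sinv = 1)
    (hS2 : Sinv ∘L ((adjoint C) ∘L C) = 1)
    (Ct : H →L[ℂ] L2 X H) (hCt : ∀ (f : H) (k : X), (Ct f) k = T k (Sinv f)) :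
    IsClosed (Set.range (C ∘L (adjoint C))) ∧
    LinearMap.ker ((Ct ∘L (adjoint Ct) : L2 X H →L[ℂ] L2 X H) : L2 X H →ₗ[ℂ] L2 X H) = (LinearMap.range ((C ∘L (adjoint C) : L2 X H →L[ℂ] L2 X H) : L2 X H →ₗ[ℂ] L2 X H))ᗮ ∧
    LinearMap.range ((Ct ∘L (adjoint Ct) : L2 X H →L[ℂ] L2 X H) : L2 X H →ₗ[ℂ] L2 X H) = (LinearMap.ker ((C ∘L (adjoint C) : L2 X H →L[ℂ] L2 X H) : L2 X H →ₗ[ℂ] L2 X H))ᗮ ∧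
    (C ∘L (adjoint C)) ∘L (Ct ∘L (adjoint Ct)) ∘L (C ∘L (adjoint C)) =
      C ∘L (adjoint C) ∧
    C ∘L (adjoint Ct) = (C ∘L (adjoint C)) ∘L (Ct ∘L (adjoint Ct)) := by
  classical
  -- pointwise versions of the inverse identities
  have hS1' : ∀ x : H, adjoint C (C (Sinv x)) = x := fun x => by
    simpa [ContinuousLinearMap.comp_apply] using
      congrArg (fun (f : H →L[ℂ] H) => f x) hS1
  have hS2' : ∀ x : H, Sinv (adjoint C (C x)) = x := fun x => by
    simpa [ContinuousLinearMap.comp_apply] using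
      congrArg (fun (f : H →L[ℂ] H) => f x) hS2
  -- Sinv is self-adjoint
  have hSa : adjoint Sinv = Sinv := by
    have h1 : adjoint Sinv ∘L ((adjoint C) ∘L C) = 1 := by
      have := congrArg adjoint hS1
      rw [adjoint_comp, adjoint_comp, adjoint_adjoint, ContinuousLinearMap.one_def,
        adjoint_id, ← ContinuousLinearMap.one_def] at this
      exact this
    have h1' : ∀ x : H, adjoint Sinv (adjoint C (C x)) = x := fun x => by
      simpa [ContinuousLinearMap.comp_apply] using
        congrArg (fun (f : H →L[ℂ] H) => f x) h1
    refine ContinuousLinearMap.ext fun x => ?_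
    conv_lhs => rw [← hS1' x]
    exact h1' (Sinv x)
  -- Ct = C ∘ Sinv
  have hCtEq : Ct = C ∘L Sinv := by
    ext f k
    rw [ContinuousLinearMap.comp_apply, hCt, hC]
  have hCtAdj : adjoint Ct = Sinv ∘L adjoint C := by
    rw [hCtEq, adjoint_comp, hSa]
  set G := C ∘L (adjoint C) with hGdef
  set Gt := Ct ∘L (adjoint Ct) with hGtdef
  set P := C ∘L (Sinv ∘L adjoint C) with hPdef
  have hGapp : ∀ x, G x = C (adjoint C x) := fun x => rfl
  have hGtapp : ∀ x, Gt x = C (Sinv (Sinv (adjoint C x))) := fun x => by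
    show Ct (adjoint Ct x) = _
    rw [hCtAdj, hCtEq]
    rfl
  have hPapp : ∀ x, P x = C (Sinv (adjoint C x)) := fun x => rfl
  -- key algebraic identities
  have hGGt : G ∘L Gt = P := by
    refine ContinuousLinearMap.ext fun x => ?_
    show G (Gt x) = P x
    rw [hGtapp, hGapp, hPapp, hS1']
  have hGtG : Gt ∘L G = P := by
    refine ContinuousLinearMap.ext fun x => ?_
    show Gt (G x) = P x
    rw [hGtapp, hGapp, hPapp, hS2']
  have hPG : ∀ x, P (G x) = G x := fun x => by
    simp only [hPapp, hGapp, hS2']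
  have hPGt : ∀ x, P (Gt x) = Gt x := fun x => by
    simp only [hPapp, hGtapp, hS1']
  have hPP : ∀ x, P (P x) = P x := fun x => by
    simp only [hPapp, hS2']
  have hPadj : adjoint P = P := by
    rw [hPdef, adjoint_comp, adjoint_comp, adjoint_adjoint, hSa,
      ContinuousLinearMap.comp_assoc]
  -- range G = range P = range Gt
  have hRangeGP : Set.range ⇑G = Set.range ⇑P := by
    apply Set.Subset.antisymm
    · rintro _ ⟨x, rfl⟩; exact ⟨G x, hPG x⟩
    · rintro _ ⟨x, rfl⟩
      refine ⟨Gt x, ?_⟩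
      have := congrArg (fun (f : L2 X H →L[ℂ] L2 X H) => f x) hGGt
      simpa [ContinuousLinearMap.comp_apply] using this
  have hRangeGtP : Set.range ⇑Gt = Set.range ⇑P := by
    apply Set.Subset.antisymm
    · rintro _ ⟨x, rfl⟩; exact ⟨Gt x, hPGt x⟩
    · rintro _ ⟨x, rfl⟩
      refine ⟨G x, ?_⟩
      have := congrArg (fun (f : L2 X H →L[ℂ] L2 X H) => f x) hGtG
      simpa [ContinuousLinearMap.comp_apply] using this
  -- range P is closed
  have hClosedP : IsClosed (Set.range ⇑P) := by
    have hfix : Set.range ⇑P = (fun x => P x - x) ⁻¹' ({0} : Set (L2 X H)) := by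
      apply Set.Subset.antisymm
      · rintro _ ⟨x, rfl⟩
        simp only [Set.mem_preimage, Set.mem_singleton_iff, hPP x, sub_self]
      · intro x hx
        simp only [Set.mem_preimage, Set.mem_singleton_iff, sub_eq_zero] at hx
        exact ⟨x, hx⟩
    rw [hfix]
    exact isClosed_singleton.preimage (P.continuous.sub continuous_id)
  have hClosedG : IsClosed (Set.range ⇑G) := by rw [hRangeGP]; exact hClosedP
  -- inner product computations
  have hInner : ∀ (w : H) (z : L2 X H), (inner ℂ (C w) z : ℂ) = inner ℂ w (adjoint C z) :=
    fun w z => (adjoint_inner_right C w z).symm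
  -- kernels: ker G = ker Gt = ker (adjoint C)
  have hKerG : ∀ z, G z = 0 ↔ adjoint C z = 0 := by
    intro z
    constructor
    · intro h
      have h0 : (inner ℂ (G z) z : ℂ) = 0 := by rw [h]; simp
      rw [hGapp, hInner] at h0
      exact inner_self_eq_zero.mp h0
    · intro h; rw [hGapp, h]; simp
  have hKerGt : ∀ z, Gt z = 0 ↔ adjoint C z = 0 := by
    intro z
    constructor
    · intro h
      have h0 : (inner ℂ (Gt z) z : ℂ) = 0 := by rw [h]; simp
      rw [hGtapp, hInner] at h0
      have h2 : (inner ℂ (Sinv (adjoint C z)) (Sinv (adjoint C z)) : ℂ) = 0 := by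
        calc (inner ℂ (Sinv (adjoint C z)) (Sinv (adjoint C z)) : ℂ)
            = inner ℂ (adjoint Sinv (Sinv (adjoint C z))) (adjoint C z) := by
              rw [adjoint_inner_left]
          _ = 0 := by rw [hSa]; exact h0
      have h3 : Sinv (adjoint C z) = 0 := inner_self_eq_zero.mp h2
      have h4 : adjoint C z = adjoint C (C (Sinv (adjoint C z))) := (hS1' _).symm
      rw [h4, h3]; simp
    · intro h; rw [hGtapp, h]; simp
  refine ⟨hClosedG, ?_, ?_, ?_, ?_⟩
  · -- ker Gt = (range G)ᗮ
    ext z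
    rw [LinearMap.mem_ker, Submodule.mem_orthogonal]
    constructor
    · intro hz u hu
      obtain ⟨x, hx⟩ := hu
      have hz0 : adjoint C z = 0 := (hKerGt z).mp hz
      have : (inner ℂ u z : ℂ) = inner ℂ (adjoint C x) (adjoint C z) := by
        rw [← hx, ContinuousLinearMap.coe_coe, hGapp, hInner]
      rw [this, hz0, inner_zero_right]
    · intro hz
      have h0 : (inner ℂ (G z) z : ℂ) = 0 := hz (G z) ⟨z, rfl⟩
      rw [hGapp, hInner] at h0
      exact (hKerGt z).mpr (inner_self_eq_zero.mp h0)
  · -- range Gt = (ker G)ᗮ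
    ext z
    rw [LinearMap.mem_range, Submodule.mem_orthogonal]
    constructor
    · rintro ⟨x, rfl⟩ u hu
      have hu0 : adjoint C u = 0 := (hKerG u).mp (LinearMap.mem_ker.mp hu)
      show (inner ℂ u (Gt x) : ℂ) = 0
      rw [hGtapp, ← adjoint_inner_left C, hu0, inner_zero_left]
    · intro hz
      have hker : G (z - P z) = 0 := by
        rw [map_sub]
        have : G (P z) = G z := by
          simp only [hGapp, hPapp, hS1']
        rw [this, sub_self]
      have h1 : (inner ℂ (z - P z) z : ℂ) = 0 := hz _ (LinearMap.mem_ker.mpr hker)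
      have h2 : (inner ℂ (z - P z) (P z) : ℂ) = 0 := by
        have hP0 : P (z - P z) = 0 := by rw [map_sub, hPP, sub_self]
        calc (inner ℂ (z - P z) (P z) : ℂ)
            = inner ℂ (adjoint P (z - P z)) z := (adjoint_inner_left P z (z - P z)).symm
          _ = 0 := by rw [hPadj, hP0, inner_zero_left]
      have h3 : (inner ℂ (z - P z) (z - P z) : ℂ) = 0 := by
        rw [inner_sub_right, h1, h2, sub_self]
      have h5 : z = P z := by
        have := sub_eq_zero.mp (inner_self_eq_zero.mp h3)
        exact this
      have : z ∈ Set.range ⇑Gt := by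
        rw [hRangeGtP]
        exact ⟨z, h5.symm⟩
      exact this
  · -- G Gt G = G
    refine ContinuousLinearMap.ext fun x => ?_
    show G (Gt (G x)) = G x
    rw [hGapp x, hGtapp, hGapp, hS1', hS2']
  · -- C Ct* = G Gt
    rw [hGGt, hPdef, hCtAdj]

end OVFrame
end
end
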